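/- Let q ∈ [0,1] and t ∈ [0,N] be a real number. The threshold profile p^t is a Bayes–Nash equilibrium at belief q if and only if i_lb(q) ≤ t ≤ i_ub(q). -/
import Mathlib

open Finset

noncomputable section

open scoped Classical

/-- Agent `i`'s expected utility for moving, when the other agents `{1,…,N}∖{i}`
independently move with probabilities `p j` and the common belief that θ = 1 is `q`. -/
def moveUtil (N : ℕ) (F r : ℕ → ℝ) (q : ℝ) (p : ℕ → ℝ) (i : ℕ) : ℝ :=
  q * ∑ T ∈ ((Icc 1 N).erase i).powerset,
      (∏ j ∈ T, p j) * (∏ j ∈ ((Icc 1 N).erase i) \ T, (1 - p j)) * F (T.card + 1)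
    - r i

/-- A Bayes–Nash equilibrium at common belief `q`: a profile `p ∈ [0,1]^N` such that
any agent with strictly positive (resp. negative) utility for moving moves (stays)
with probability one. -/
def IsBNE (N : ℕ) (F r : ℕ → ℝ) (q : ℝ) (p : ℕ → ℝ) : Prop :=
  (∀ i ∈ Icc 1 N, 0 ≤ p i ∧ p i ≤ 1) ∧
  ∀ i ∈ Icc 1 N,
    (0 < moveUtil N F r q p i → p i = 1) ∧
    (moveUtil N F r q p i < 0 → p i = 0)

/-- `i_ub(q) = max{ i ∈ {0,…,N} : q·F(i) − r(i) ≥ 0 }` (the junk value 0 if empty). -/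
def iUB (N : ℕ) (F r : ℕ → ℝ) (q : ℝ) : ℕ :=
  ((range (N + 1)).filter (fun i => 0 ≤ q * F i - r i)).sup id

/-- `i_lb(q) = max{ i ∈ {0,…,N} : q·F(i) − r(i) > 0 }`, with value 0 if empty. -/
def iLB (N : ℕ) (F r : ℕ → ℝ) (q : ℝ) : ℕ :=
  ((range (N + 1)).filter (fun i => 0 < q * F i - r i)).sup id

/-- The threshold profile `p^t` for a real threshold `t ≥ 0`:
agents `i < ⌈t⌉` move, agent `⌈t⌉` moves with probability `t + 1 − ⌈t⌉`, and
agents `i > ⌈t⌉` stay. -/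
def thresh (t : ℝ) : ℕ → ℝ := fun i =>
  if i < Nat.ceil t then 1
  else if i = Nat.ceil t then t + 1 - (Nat.ceil t : ℝ)
  else 0

lemma sum_pure (s A : Finset ℕ) (hA : A ⊆ s) (p : ℕ → ℝ) (f : ℕ → ℝ)
    (h1 : ∀ j ∈ A, p j = 1) (h0 : ∀ j ∈ s, j ∉ A → p j = 0) :
    ∑ T ∈ s.powerset, (∏ j ∈ T, p j) * (∏ j ∈ s \ T, (1 - p j)) * f T.card = f A.card := by
  rw [Finset.sum_eq_single_of_mem A (Finset.mem_powerset.mpr hA)]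
  · have e1 : ∏ j ∈ A, p j = 1 := Finset.prod_eq_one h1
    have e2 : ∏ j ∈ s \ A, (1 - p j) = 1 := by
      apply Finset.prod_eq_one
      intro j hj
      rw [Finset.mem_sdiff] at hj
      rw [h0 j hj.1 hj.2]; ring
    rw [e1, e2]; ring
  · intro T hT hne
    rw [Finset.mem_powerset] at hT
    by_cases hTA : T ⊆ A
    · obtain ⟨j, hjA, hjT⟩ : ∃ j ∈ A, j ∉ T := by
        by_contra h
        push_neg at h
        exact hne (Finset.Subset.antisymm hTA h)
      have : ∏ j ∈ s \ T, (1 - p j) = 0 :=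
        Finset.prod_eq_zero (Finset.mem_sdiff.mpr ⟨hA hjA, hjT⟩) (by rw [h1 j hjA]; ring)
      rw [this]; ring
    · obtain ⟨j, hjT, hjA⟩ := not_subset.mp hTA
      have : ∏ j ∈ T, p j = 0 := Finset.prod_eq_zero hjT (h0 j (hT hjT) hjA)
      rw [this]; ring

lemma sum_frac (s A : Finset ℕ) (c : ℕ) (hA : A ⊆ s) (hc : c ∈ s) (hcA : c ∉ A)
    (p : ℕ → ℝ) (f : ℕ → ℝ)
    (h1 : ∀ j ∈ A, p j = 1) (h0 : ∀ j ∈ s, j ∉ A → j ≠ c → p j = 0) :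
    ∑ T ∈ s.powerset, (∏ j ∈ T, p j) * (∏ j ∈ s \ T, (1 - p j)) * f T.card
      = (1 - p c) * f A.card + p c * f (A.card + 1) := by
  have hs : s = insert c (s.erase c) := (Finset.insert_erase hc).symm
  have hc' : c ∉ s.erase c := Finset.notMem_erase c s
  have hA' : A ⊆ s.erase c := fun j hj =>
    Finset.mem_erase.mpr ⟨fun h => hcA (h ▸ hj), hA hj⟩
  rw [hs, Finset.sum_powerset_insert hc']
  have e1 : ∑ T ∈ (s.erase c).powerset,
      (∏ j ∈ T, p j) * (∏ j ∈ insert c (s.erase c) \ T, (1 - p j)) * f T.card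
      = (1 - p c) * f A.card := by
    have : ∀ T ∈ (s.erase c).powerset,
        (∏ j ∈ T, p j) * (∏ j ∈ insert c (s.erase c) \ T, (1 - p j)) * f T.card
        = (1 - p c) * ((∏ j ∈ T, p j) * (∏ j ∈ s.erase c \ T, (1 - p j)) * f T.card) := by
      intro T hT
      rw [Finset.mem_powerset] at hT
      have hcT : c ∉ T := fun h => hc' (hT h)
      have hd : insert c (s.erase c) \ T = insert c (s.erase c \ T) := by
        ext x
        simp only [Finset.mem_sdiff, Finset.mem_insert, Finset.mem_erase]
        constructor
        · rintro ⟨h1 | h1, h2⟩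
          · exact Or.inl h1
          · exact Or.inr ⟨h1, h2⟩
        · rintro (h1 | ⟨h1, h2⟩)
          · exact ⟨Or.inl h1, h1 ▸ hcT⟩
          · exact ⟨Or.inr h1, h2⟩
      have hcn : c ∉ s.erase c \ T := fun h => hc' (Finset.mem_sdiff.mp h).1
      rw [hd, Finset.prod_insert hcn]
      ring
    rw [Finset.sum_congr rfl this, ← Finset.mul_sum,
      sum_pure (s.erase c) A hA' p f h1 (fun j hj hjA => h0 j (Finset.erase_subset c s hj) hjA (Finset.mem_erase.mp hj).1)]
  have e2 : ∑ T ∈ (s.erase c).powerset,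
      (∏ j ∈ insert c T, p j) * (∏ j ∈ insert c (s.erase c) \ insert c T, (1 - p j)) * f (insert c T).card
      = p c * f (A.card + 1) := by
    have : ∀ T ∈ (s.erase c).powerset,
        (∏ j ∈ insert c T, p j) * (∏ j ∈ insert c (s.erase c) \ insert c T, (1 - p j)) * f (insert c T).card
        = p c * ((∏ j ∈ T, p j) * (∏ j ∈ s.erase c \ T, (1 - p j)) * f (T.card + 1)) := by
      intro T hT
      rw [Finset.mem_powerset] at hT
      have hcT : c ∉ T := fun h => hc' (hT h)
      have hd : insert c (s.erase c) \ insert c T = s.erase c \ T := by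
        ext x
        simp only [Finset.mem_sdiff, Finset.mem_insert, Finset.mem_erase]
        tauto
      rw [hd, Finset.prod_insert hcT, Finset.card_insert_of_notMem hcT]
      ring
    rw [Finset.sum_congr rfl this, ← Finset.mul_sum,
      sum_pure (s.erase c) A hA' p (fun n => f (n + 1)) h1
        (fun j hj hjA => h0 j (Finset.erase_subset c s hj) hjA (Finset.mem_erase.mp hj).1)]
  rw [e1, e2]

lemma moveUtil_pure (N : ℕ) (F r : ℕ → ℝ) (q : ℝ) (p : ℕ → ℝ) (i : ℕ) (A : Finset ℕ)
    (hA : A ⊆ (Icc 1 N).erase i)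
    (h1 : ∀ j ∈ A, p j = 1) (h0 : ∀ j ∈ (Icc 1 N).erase i, j ∉ A → p j = 0) :
    moveUtil N F r q p i = q * F (A.card + 1) - r i := by
  rw [moveUtil, sum_pure ((Icc 1 N).erase i) A hA p (fun n => F (n + 1)) h1 h0]

lemma moveUtil_frac (N : ℕ) (F r : ℕ → ℝ) (q : ℝ) (p : ℕ → ℝ) (i : ℕ) (A : Finset ℕ) (c : ℕ)
    (hA : A ⊆ (Icc 1 N).erase i) (hc : c ∈ (Icc 1 N).erase i) (hcA : c ∉ A)
    (h1 : ∀ j ∈ A, p j = 1) (h0 : ∀ j ∈ (Icc 1 N).erase i, j ∉ A → j ≠ c → p j = 0) :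
    moveUtil N F r q p i
      = q * ((1 - p c) * F (A.card + 1) + p c * F (A.card + 2)) - r i := by
  rw [moveUtil, sum_frac ((Icc 1 N).erase i) A c hA hc hcA p (fun n => F (n + 1)) h1 h0]

lemma thresh_one {t : ℝ} {i : ℕ} (h : (i : ℝ) ≤ t) : thresh t i = 1 := by
  have hle : i ≤ Nat.ceil t := by
    have h2 := Nat.le_ceil t
    exact_mod_cast h.trans h2
  rcases lt_or_eq_of_le hle with hlt | heq
  · simp [thresh, hlt]
  · have ht : t = (i : ℝ) := by
      have h2 := Nat.le_ceil t
      rw [← heq] at h2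
      linarith
    simp [thresh, ← heq, ht]

lemma thresh_zero {t : ℝ} {i : ℕ} (h : Nat.ceil t < i) : thresh t i = 0 := by
  simp only [thresh]
  rw [if_neg (by omega), if_neg (by omega)]

lemma thresh_ceil (t : ℝ) : thresh t (Nat.ceil t) = t + 1 - (Nat.ceil t : ℝ) := by
  simp [thresh]

lemma thresh_mem {t : ℝ} (ht : 0 ≤ t) (i : ℕ) : 0 ≤ thresh t i ∧ thresh t i ≤ 1 := by
  have h1 := Nat.le_ceil t
  have h2 := Nat.ceil_lt_add_one ht
  simp only [thresh]
  split_ifs <;> constructor <;> linarith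

theorem stmt11 (N : ℕ) (hN : 1 ≤ N) (F r : ℕ → ℝ)
    (hFnn : ∀ n, n ≤ N → 0 ≤ F n) (hF01 : F 0 = F 1)
    (hFmono : ∀ n, n + 1 ≤ N → F (n + 1) ≤ F n)
    (hr0 : r 0 = 0) (hrnn : ∀ i, i ≤ N → 0 ≤ r i)
    (hrmono : ∀ i, i + 1 ≤ N → r i ≤ r (i + 1))
    (q : ℝ) (hq0 : 0 ≤ q) (hq1 : q ≤ 1)
    (t : ℝ) (ht0 : 0 ≤ t) (htN : t ≤ (N : ℝ)) :
    IsBNE N F r q (thresh t) ↔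
      ((iLB N F r q : ℝ) ≤ t ∧ t ≤ (iUB N F r q : ℝ)) := by
  -- monotonicity facts
  have hrm : ∀ b, b ≤ N → ∀ a, a ≤ b → r a ≤ r b := by
    intro b
    induction b with
    | zero =>
      intro _ a ha
      have : a = 0 := by omega
      rw [this]
    | succ n ih =>
      intro hb a ha
      rcases Nat.eq_or_lt_of_le ha with h | h
      · subst h; exact le_refl _
      · exact (ih (by omega) a (by omega)).trans (hrmono n hb)
  have hFa : ∀ b, b ≤ N → ∀ a, a ≤ b → F b ≤ F a := by
    intro b
    induction b with
    | zero =>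
      intro _ a ha
      have : a = 0 := by omega
      rw [this]
    | succ n ih =>
      intro hb a ha
      rcases Nat.eq_or_lt_of_le ha with h | h
      · subst h; exact le_refl _
      · exact (hFmono n hb).trans (ih (by omega) a (by omega))
  have hg : ∀ a b, a ≤ b → b ≤ N → q * F b - r b ≤ q * F a - r a := by
    intro a b hab hbN
    have h1 := hFa b hbN a hab
    have h2 := hrm b hbN a hab
    nlinarith
  -- iUB facts
  have hUB_le : iUB N F r q ≤ N := by
    apply Finset.sup_le
    intro i hi
    simp only [Finset.mem_filter, Finset.mem_range] at hi
    simpa using Nat.lt_succ_iff.mp hi.1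
  have hle_UB : ∀ m, m ≤ N → 0 ≤ q * F m - r m → m ≤ iUB N F r q := by
    intro m hm h
    exact Finset.le_sup (f := id)
      (Finset.mem_filter.mpr ⟨Finset.mem_range.mpr (by omega), h⟩)
  have hUB_mem : 0 ≤ q * F (iUB N F r q) - r (iUB N F r q) := by
    have hne : ((range (N + 1)).filter (fun i => 0 ≤ q * F i - r i)).Nonempty := by
      refine ⟨0, Finset.mem_filter.mpr ⟨Finset.mem_range.mpr (by omega), ?_⟩⟩
      rw [hr0]
      have := mul_nonneg hq0 (hFnn 0 (Nat.zero_le N))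
      linarith
    obtain ⟨i, hi, hEq⟩ := Finset.exists_mem_eq_sup _ hne id
    rw [iUB, hEq]
    exact (Finset.mem_filter.mp hi).2
  have hUB_spec : ∀ m, m ≤ iUB N F r q → 0 ≤ q * F m - r m := by
    intro m hm
    exact le_trans hUB_mem (hg m (iUB N F r q) hm hUB_le)
  -- iLB facts
  have hLB_leN : iLB N F r q ≤ N := by
    apply Finset.sup_le
    intro i hi
    simp only [Finset.mem_filter, Finset.mem_range] at hi
    simpa using Nat.lt_succ_iff.mp hi.1
  have hLB_le : ∀ m, m + 1 ≤ N → q * F (m + 1) - r (m + 1) ≤ 0 → iLB N F r q ≤ m := by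
    intro m hm h
    apply Finset.sup_le
    intro i hi
    simp only [Finset.mem_filter, Finset.mem_range] at hi
    by_contra hcon
    have hcon' : m + 1 ≤ i := by simpa using Nat.lt_of_not_le (by simpa using hcon)
    have := hg (m + 1) i hcon' (by omega)
    have := hi.2
    simp only [id_eq] at *
    linarith
  have hLB_spec : ∀ m, m + 1 ≤ N → iLB N F r q ≤ m → q * F (m + 1) - r (m + 1) ≤ 0 := by
    intro m hm h
    by_contra hcon
    push_neg at hcon
    have : m + 1 ≤ iLB N F r q := Finset.le_sup (f := id)
      (Finset.mem_filter.mpr ⟨Finset.mem_range.mpr (by omega), hcon⟩)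
    omega
  set c := Nat.ceil t with hcdef
  have hcN : c ≤ N := Nat.ceil_le.mpr htN
  have htc : t ≤ (c : ℝ) := Nat.le_ceil t
  by_cases hint : t = (c : ℝ)
  · -- integer case
    have keyle : ∀ i, 1 ≤ i → i ≤ c → moveUtil N F r q (thresh t) i = q * F c - r i := by
      intro i h1 h2
      have hiN : i ≤ N := le_trans h2 hcN
      have hiIcc : i ∈ Icc 1 c := mem_Icc.mpr ⟨h1, h2⟩
      have hcard : ((Icc 1 c).erase i).card + 1 = c := by
        rw [Finset.card_erase_of_mem hiIcc, Nat.card_Icc]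
        omega
      rw [moveUtil_pure N F r q _ i ((Icc 1 c).erase i)
        (Finset.erase_subset_erase i (Finset.Icc_subset_Icc_right hcN))
        (by
          intro j hj
          rw [mem_erase, mem_Icc] at hj
          refine thresh_one ?_
          rw [hint]
          exact_mod_cast hj.2.2)
        (by
          intro j hj hjA
          rw [mem_erase, mem_Icc] at hj
          rw [mem_erase, mem_Icc] at hjA
          push_neg at hjA
          refine thresh_zero ?_
          rw [← hcdef]
          rcases hj with ⟨hji, hj1, hjN⟩
          by_contra hcon
          push_neg at hcon
          exact absurd (hjA hji hj1) (by omega)),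
        hcard]
    have keygt : ∀ i, c < i → i ≤ N →
        moveUtil N F r q (thresh t) i = q * F (c + 1) - r i := by
      intro i h1 h2
      have hcard : (Icc 1 c).card = c := by rw [Nat.card_Icc]; omega
      rw [moveUtil_pure N F r q _ i (Icc 1 c)
        (by
          intro j hj
          rw [mem_Icc] at hj
          rw [mem_erase, mem_Icc]
          exact ⟨by omega, by omega, by omega⟩)
        (by
          intro j hj
          rw [mem_Icc] at hj
          refine thresh_one ?_
          rw [hint]
          exact_mod_cast hj.2)
        (by
          intro j hj hjA
          rw [mem_erase, mem_Icc] at hj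
          rw [mem_Icc] at hjA
          push_neg at hjA
          refine thresh_zero ?_
          rw [← hcdef]
          omega),
        hcard]
    constructor
    · rintro ⟨hp, hbne⟩
      constructor
      · rw [hint, Nat.cast_le]
        by_cases hceq : c = N
        · rw [hceq]; exact hLB_leN
        · have hc1 : c + 1 ≤ N := by omega
          apply hLB_le c hc1
          have hu := keygt (c + 1) (by omega) hc1
          have hb := (hbne (c + 1) (mem_Icc.mpr ⟨by omega, hc1⟩)).1
          by_contra hcon
          push_neg at hcon
          rw [hu] at hb
          have := hb hcon
          rw [thresh_zero (by rw [← hcdef]; omega)] at this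
          norm_num at this
      · rw [hint, Nat.cast_le]
        rcases Nat.eq_zero_or_pos c with hc0 | hc1
        · rw [hc0]; exact Nat.zero_le _
        · apply hle_UB c hcN
          have hu := keyle c hc1 (le_refl c)
          have hb := (hbne c (mem_Icc.mpr ⟨hc1, hcN⟩)).2
          by_contra hcon
          push_neg at hcon
          rw [hu] at hb
          have := hb hcon
          rw [thresh_one (by rw [hint])] at this
          norm_num at this
    · rintro ⟨hL, hU⟩
      rw [hint, Nat.cast_le] at hL hU
      refine ⟨fun i _ => thresh_mem ht0 i, ?_⟩
      intro i hi
      rw [mem_Icc] at hi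
      by_cases hic : i ≤ c
      · have hu := keyle i hi.1 hic
        have hth : thresh t i = 1 := thresh_one (by rw [hint]; exact_mod_cast hic)
        constructor
        · intro _; exact hth
        · intro hneg
          exfalso
          have h1 : 0 ≤ q * F c - r c := hUB_spec c hU
          have h2 : r i ≤ r c := hrm c hcN i hic
          rw [hu] at hneg
          linarith
      · push_neg at hic
        have hu := keygt i hic hi.2
        have hth : thresh t i = 0 := thresh_zero (by rw [← hcdef]; omega)
        refine ⟨?_, fun _ => hth⟩
        intro hpos
        exfalso
        have hc1 : c + 1 ≤ N := by omega
        have h1 : q * F (c + 1) - r (c + 1) ≤ 0 := hLB_spec c hc1 hL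
        have h2 : r (c + 1) ≤ r i := hrm i hi.2 (c + 1) (by omega)
        rw [hu] at hpos
        linarith
  · -- non-integer case
    have htlt : t < (c : ℝ) := lt_of_le_of_ne htc hint
    have hc1 : 1 ≤ c := by
      by_contra hcon
      push_neg at hcon
      interval_cases c
      · simp only [Nat.cast_zero] at htlt; linarith
    have hclb : (c : ℝ) - 1 < t := by
      have : (c - 1 : ℕ) < Nat.ceil t := by omega
      have := Nat.lt_ceil.mp this
      push_cast [Nat.cast_sub hc1] at this ⊢
      · exact_mod_cast this
    set ε := t + 1 - (c : ℝ) with hεdef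
    have hε0 : 0 < ε := by simp only [hεdef]; linarith
    have hε1 : ε < 1 := by simp only [hεdef]; linarith
    have hthc : thresh t c = ε := thresh_ceil t
    have hAcard : (Icc 1 (c - 1)).card = c - 1 := by rw [Nat.card_Icc]; omega
    have hAsub : ∀ i, Icc 1 (c - 1) ⊆ (Icc 1 N).erase i → True := fun _ _ => trivial
    have hone : ∀ j ∈ Icc 1 (c - 1), thresh t j = 1 := by
      intro j hj
      rw [mem_Icc] at hj
      have hj' : j + 1 ≤ c := by omega
      have hj'' : (j : ℝ) + 1 ≤ (c : ℝ) := by exact_mod_cast hj'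
      exact thresh_one (by linarith)
    -- utilities
    have keylt : ∀ i, 1 ≤ i → i < c →
        moveUtil N F r q (thresh t) i
          = q * ((1 - ε) * F (c - 1) + ε * F c) - r i := by
      intro i h1 h2
      have hc2 : 2 ≤ c := by omega
      have hiA : i ∈ Icc 1 (c - 1) := mem_Icc.mpr ⟨h1, by omega⟩
      have hcard : ((Icc 1 (c - 1)).erase i).card = c - 2 := by
        rw [Finset.card_erase_of_mem hiA, hAcard]
        omega
      have hres := moveUtil_frac N F r q (thresh t) i ((Icc 1 (c - 1)).erase i) c
        (by
          refine Finset.erase_subset_erase i (Finset.Icc_subset_Icc_right (by omega)))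
        (by rw [mem_erase, mem_Icc]; exact ⟨by omega, by omega, hcN⟩)
        (by rw [mem_erase, mem_Icc]; push_neg; intro _ _; omega)
        (fun j hj => hone j (Finset.mem_of_mem_erase hj))
        (by
          intro j hj hjA hjc
          rw [mem_erase, mem_Icc] at hj
          rw [mem_erase, mem_Icc] at hjA
          push_neg at hjA
          refine thresh_zero ?_
          rw [← hcdef]
          rcases hj with ⟨hji, hj1, hjN⟩
          by_contra hcon
          push_neg at hcon
          exact absurd (hjA hji hj1) (by omega))
      rw [hres, hthc, hcard]
      have e1 : c - 2 + 1 = c - 1 := by omega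
      have e2 : c - 2 + 2 = c := by omega
      rw [e1, e2]
    have keyeq : moveUtil N F r q (thresh t) c = q * F c - r c := by
      have hres := moveUtil_pure N F r q (thresh t) c (Icc 1 (c - 1))
        (by
          intro j hj
          rw [mem_Icc] at hj
          rw [mem_erase, mem_Icc]
          exact ⟨by omega, by omega, by omega⟩)
        hone
        (by
          intro j hj hjA
          rw [mem_erase, mem_Icc] at hj
          rw [mem_Icc] at hjA
          push_neg at hjA
          refine thresh_zero ?_
          rw [← hcdef]
          omega)
      rw [hres, hAcard]
      have e : c - 1 + 1 = c := by omega
      rw [e]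
    have keygt2 : ∀ i, c < i → i ≤ N →
        moveUtil N F r q (thresh t) i
          = q * ((1 - ε) * F c + ε * F (c + 1)) - r i := by
      intro i h1 h2
      have hres := moveUtil_frac N F r q (thresh t) i (Icc 1 (c - 1)) c
        (by
          intro j hj
          rw [mem_Icc] at hj
          rw [mem_erase, mem_Icc]
          exact ⟨by omega, by omega, by omega⟩)
        (by rw [mem_erase, mem_Icc]; exact ⟨by omega, hc1, hcN⟩)
        (by rw [mem_Icc]; push_neg; intro _; omega)
        hone
        (by
          intro j hj hjA hjc
          rw [mem_erase, mem_Icc] at hj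
          rw [mem_Icc] at hjA
          push_neg at hjA
          refine thresh_zero ?_
          rw [← hcdef]
          omega)
      rw [hres, hthc, hAcard]
      have e1 : c - 1 + 1 = c := by omega
      have e2 : c - 1 + 2 = c + 1 := by omega
      rw [e1, e2]
    constructor
    · rintro ⟨hp, hbne⟩
      -- agent c forces q F c = r c
      have hb := hbne c (mem_Icc.mpr ⟨hc1, hcN⟩)
      have hgc : q * F c - r c = 0 := by
        rcases lt_trichotomy (q * F c - r c) 0 with h | h | h
        · have := hb.2 (by rw [keyeq]; exact h)
          rw [hthc] at this
          exact absurd this (by linarith)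
        · exact h
        · have := hb.1 (by rw [keyeq]; exact h)
          rw [hthc] at this
          exact absurd this (by linarith)
      constructor
      · have h' : iLB N F r q ≤ c - 1 := by
          apply hLB_le (c - 1) (by omega)
          have e : c - 1 + 1 = c := by omega
          rw [e]
          linarith
        have h'' : (iLB N F r q : ℝ) ≤ ((c - 1 : ℕ) : ℝ) := by exact_mod_cast h'
        have h3 : ((c - 1 : ℕ) : ℝ) = (c : ℝ) - 1 := by
          rw [Nat.cast_sub hc1]; norm_num
        linarith
      · have h' : c ≤ iUB N F r q := hle_UB c hcN (by linarith)
        have h'' : (c : ℝ) ≤ (iUB N F r q : ℝ) := by exact_mod_cast h'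
        linarith
    · rintro ⟨hL, hU⟩
      have hLn : iLB N F r q ≤ c - 1 := by
        have : (iLB N F r q : ℝ) < (c : ℝ) := lt_of_le_of_lt hL htlt
        have : iLB N F r q < c := by exact_mod_cast this
        omega
      have hUn : c ≤ iUB N F r q := by
        have h1 : ((c : ℝ) - 1) < (iUB N F r q : ℝ) := lt_of_lt_of_le hclb hU
        have h2 : ((c - 1 : ℕ) : ℝ) < (iUB N F r q : ℝ) := by
          rw [Nat.cast_sub hc1]; push_cast; linarith
        have : c - 1 < iUB N F r q := by exact_mod_cast h2
        omega
      have hgc0 : 0 ≤ q * F c - r c := hUB_spec c hUn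
      have hgc1 : q * F c - r c ≤ 0 := by
        have := hLB_spec (c - 1) (by omega) hLn
        have e : c - 1 + 1 = c := by omega
        rwa [e] at this
      have hgc : q * F c = r c := by linarith
      refine ⟨fun i _ => thresh_mem ht0 i, ?_⟩
      intro i hi
      rw [mem_Icc] at hi
      rcases lt_trichotomy i c with hic | hic | hic
      · have hu := keylt i hi.1 hic
        have hth : thresh t i = 1 := hone i (mem_Icc.mpr ⟨hi.1, by omega⟩)
        refine ⟨fun _ => hth, ?_⟩
        intro hneg
        exfalso
        have hFd : F c ≤ F (c - 1) := by
          have := hFmono (c - 1) (by omega)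
          have e : c - 1 + 1 = c := by omega
          rwa [e] at this
        have h2 : r i ≤ r c := hrm c hcN i (by omega)
        have h3 : 0 ≤ q * (1 - ε) * (F (c - 1) - F c) :=
          mul_nonneg (mul_nonneg hq0 (by linarith)) (by linarith)
        have e : q * ((1 - ε) * F (c - 1) + ε * F c)
            = q * F c + q * (1 - ε) * (F (c - 1) - F c) := by ring
        rw [hu] at hneg
        linarith
      · subst hic
        rw [keyeq]
        constructor
        · intro h; exfalso; linarith
        · intro h; exfalso; linarith
      · have hu := keygt2 i hic hi.2
        have hth : thresh t i = 0 := thresh_zero (by rw [← hcdef]; omega)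
        refine ⟨?_, fun _ => hth⟩
        intro hpos
        exfalso
        have hFd : F (c + 1) ≤ F c := hFmono c (by omega)
        have h2 : r c ≤ r i := hrm i hi.2 c (by omega)
        have h3 : 0 ≤ q * ε * (F c - F (c + 1)) :=
          mul_nonneg (mul_nonneg hq0 (by linarith)) (by linarith)
        have e : q * ((1 - ε) * F c + ε * F (c + 1))
            = q * F c - q * ε * (F c - F (c + 1)) := by ring
        rw [hu] at hpos
        linarith
end
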